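/- If a differentiable function E : [0, ∞) → R satisfies E'(t) ≤ −(μ/2s)‖X(t) − x⋆‖² and f is μ-strongly convex, then the time average X̄(t) = (1/t)∫₀^t X(τ)dτ satisfies ‖X̄(t) − x⋆‖² ≤ (2s/(μ t)) E(0) for all t > 0. -/

import Mathlib

open intervalIntegral MeasureTheory RealInnerProductSpace

theorem time_average_strong_convergence
    {Ed : Type*} [NormedAddCommGroup Ed] [InnerProductSpace ℝ Ed] [CompleteSpace Ed]
    (X : ℝ → Ed) (hX : Continuous X) (xstar : Ed) (μ s : ℝ) (hμ : 0 < μ) (hs : 0 < s)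
    (E E' : ℝ → ℝ) (hE : ∀ t, HasDerivAt E (E' t) t) (hEnonneg : ∀ t, 0 ≤ E t)
    (hE' : ∀ t, E' t ≤ -(μ / (2 * s)) * ‖X t - xstar‖ ^ 2) :
    ∀ t : ℝ, 0 < t →
      ‖(t⁻¹ • ∫ τ in (0 : ℝ)..t, X τ) - xstar‖ ^ 2 ≤ (2 * s / (μ * t)) * E 0 := by
  intro t ht
  have hc : 0 < μ / (2 * s) := by positivity
  set g : ℝ → ℝ := fun τ => ‖X τ - xstar‖ ^ 2 with hg
  have hXc : Continuous fun τ => X τ - xstar := hX.sub continuous_const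
  have hgc : Continuous g := (hXc.norm.pow 2)
  -- Step 2 : (μ/2s) ∫ g ≤ E 0
  have key2 : (μ / (2 * s)) * ∫ τ in (0:ℝ)..t, g τ ≤ E 0 := by
    set F : ℝ → ℝ := fun u => E u + (μ / (2 * s)) * ∫ τ in (0:ℝ)..u, g τ with hF
    have hFd : ∀ u, HasDerivAt F (E' u + (μ / (2 * s)) * g u) u := by
      intro u
      have h1 : HasDerivAt (fun u => ∫ τ in (0:ℝ)..u, g τ) (g u) u :=
        intervalIntegral.integral_hasDerivAt_right (hgc.intervalIntegrable _ _)
          (hgc.stronglyMeasurableAtFilter _ _) hgc.continuousAt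
      exact (hE u).add (h1.const_mul _)
    have hanti : Antitone F := by
      apply antitone_of_deriv_nonpos
      · exact fun u => (hFd u).differentiableAt
      · intro u
        rw [(hFd u).deriv]
        have h2 := hE' u
        simp only [hg]
        nlinarith [h2]
    have h0 : F 0 = E 0 := by simp [hF]
    have ht' : F t ≤ F 0 := hanti ht.le
    have := hEnonneg t
    rw [h0] at ht'
    simp only [hF] at ht'
    linarith
  -- Step 1 : ‖y‖² ≤ t⁻¹ ∫ g
  set I : Ed := ∫ τ in (0:ℝ)..t, (X τ - xstar) with hI
  set y : Ed := (t⁻¹ • ∫ τ in (0 : ℝ)..t, X τ) - xstar with hy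
  have hXint : IntervalIntegrable X volume 0 t := hX.intervalIntegrable _ _
  have hXint' : IntervalIntegrable (fun τ => X τ - xstar) volume 0 t := hXc.intervalIntegrable _ _
  have hyI : y = t⁻¹ • I := by
    rw [hy, hI, intervalIntegral.integral_sub hXint intervalIntegrable_const,
      intervalIntegral.integral_const, smul_sub, sub_zero, smul_smul,
      inv_mul_cancel₀ ht.ne', one_smul]
  have hinner : ⟪y, I⟫ = ∫ τ in (0:ℝ)..t, ⟪y, X τ - xstar⟫ := by
    have := (innerSL ℝ y).intervalIntegral_comp_comm hXint'
    simpa using this.symm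
  have hsq : ‖y‖ ^ 2 = t⁻¹ * ∫ τ in (0:ℝ)..t, ⟪y, X τ - xstar⟫ := by
    rw [← hinner, ← real_inner_self_eq_norm_sq]
    nth_rewrite 2 [hyI]
    rw [real_inner_smul_right]
  have hbound : (∫ τ in (0:ℝ)..t, ⟪y, X τ - xstar⟫)
      ≤ ∫ τ in (0:ℝ)..t, (‖y‖ ^ 2 / 2 + g τ / 2) := by
    apply intervalIntegral.integral_mono_on ht.le
    · exact ((innerSL ℝ y).continuous.comp hXc).intervalIntegrable _ _
    · exact (continuous_const.add (hgc.div_const 2)).intervalIntegrable _ _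
    · intro τ _
      have h1 : ⟪y, X τ - xstar⟫ ≤ ‖y‖ * ‖X τ - xstar‖ := real_inner_le_norm _ _
      simp only [hg]
      nlinarith [sq_nonneg (‖y‖ - ‖X τ - xstar‖)]
  have hrhs : (∫ τ in (0:ℝ)..t, (‖y‖ ^ 2 / 2 + g τ / 2))
      = t * (‖y‖ ^ 2 / 2) + (∫ τ in (0:ℝ)..t, g τ) / 2 := by
    rw [intervalIntegral.integral_add (intervalIntegrable_const) ((hgc.div_const 2).intervalIntegrable _ _),
      intervalIntegral.integral_const, intervalIntegral.integral_div]
    simp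
  have hgint_nonneg : 0 ≤ ∫ τ in (0:ℝ)..t, g τ :=
    intervalIntegral.integral_nonneg ht.le (fun τ _ => by positivity)
  have hstep1 : ‖y‖ ^ 2 ≤ t⁻¹ * ∫ τ in (0:ℝ)..t, g τ := by
    have h2 : ‖y‖ ^ 2 ≤ t⁻¹ * (t * (‖y‖ ^ 2 / 2) + (∫ τ in (0:ℝ)..t, g τ) / 2) :=
      hsq.le.trans (mul_le_mul_of_nonneg_left (hrhs ▸ hbound) (by positivity))
    have htne : t ≠ 0 := ht.ne'
    have h3 : t * ‖y‖ ^ 2 ≤ t * (‖y‖ ^ 2 / 2) + (∫ τ in (0:ℝ)..t, g τ) / 2 := by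
      have h4 := mul_le_mul_of_nonneg_left h2 ht.le
      rwa [← mul_assoc, mul_inv_cancel₀ htne, one_mul] at h4
    rw [inv_mul_eq_div, le_div_iff₀ ht]
    nlinarith [h3]
  -- combine
  have hB : (∫ τ in (0:ℝ)..t, g τ) ≤ (2 * s / μ) * E 0 := by
    rw [← le_div_iff₀' hc] at key2
    calc (∫ τ in (0:ℝ)..t, g τ) ≤ E 0 / (μ / (2 * s)) := key2
      _ = (2 * s / μ) * E 0 := by rw [div_div_eq_mul_div]; ring
  calc ‖y‖ ^ 2 ≤ t⁻¹ * ∫ τ in (0:ℝ)..t, g τ := hstep1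
    _ ≤ t⁻¹ * ((2 * s / μ) * E 0) := by
        apply mul_le_mul_of_nonneg_left hB (by positivity)
    _ = (2 * s / (μ * t)) * E 0 := by
        have hμ0 : μ ≠ 0 := hμ.ne'
        have ht0 : t ≠ 0 := ht.ne'
        field_simp
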